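/- arXiv:2107.04877 — 3 statements merged into one kernel-verified Lean document; each statement's English description precedes it below -/
import Mathlib

section
/- If two vertices u and v of a connected graph G are mutually maximally distant, then every strong resolving set of G contains u or v. -/
open SimpleGraph Finset

variable {V : Type*}

/-- A vertex `x` resolves the pair `u, v` if it is at different distances from them. -/
def IsResolvingSet (G : SimpleGraph V) (S : Set V) : Prop :=
  ∀ u v : V, u ≠ v → ∃ x ∈ S, G.dist u x ≠ G.dist v x

/-- The metric dimension: minimum cardinality of a resolving set. -/
noncomputable def metricDim (G : SimpleGraph V) [Fintype V] : ℕ :=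
  sInf {n | ∃ S : Finset V, S.card = n ∧ IsResolvingSet G ↑S}

/-- `w` strongly resolves `u, v`. -/
def StronglyResolves (G : SimpleGraph V) (w u v : V) : Prop :=
  G.dist w u = G.dist w v + G.dist v u ∨ G.dist w v = G.dist w u + G.dist u v

def IsStrongResolvingSet (G : SimpleGraph V) (S : Set V) : Prop :=
  ∀ u v : V, u ≠ v → ∃ w ∈ S, StronglyResolves G w u v

noncomputable def strongMetricDim (G : SimpleGraph V) [Fintype V] : ℕ :=
  sInf {n | ∃ S : Finset V, S.card = n ∧ IsStrongResolvingSet G ↑S}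

/-- `u` is maximally distant from `v`. -/
def MaxDistant (G : SimpleGraph V) (u v : V) : Prop :=
  ∀ w : V, G.Adj u w → G.dist v w ≤ G.dist v u

def MutuallyMaxDistant (G : SimpleGraph V) (u v : V) : Prop :=
  MaxDistant G u v ∧ MaxDistant G v u

/-- The strong resolving graph of `G`. -/
def strongResolvingGraph (G : SimpleGraph V) : SimpleGraph V where
  Adj u v := u ≠ v ∧ MutuallyMaxDistant G u v
  symm := by
    refine ⟨fun u v h => ?_⟩
    exact ⟨h.1.symm, h.2.2, h.2.1⟩
  loopless := by
    refine ⟨fun u h => ?_⟩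
    exact h.1 rfl

def IsVertexCover (H : SimpleGraph V) (S : Set V) : Prop :=
  ∀ u v : V, H.Adj u v → u ∈ S ∨ v ∈ S

noncomputable def vertexCoverNum (H : SimpleGraph V) [Fintype V] : ℕ :=
  sInf {n | ∃ S : Finset V, S.card = n ∧ _root_.IsVertexCover H ↑S}

def IsLocalResolvingSet (G : SimpleGraph V) (S : Set V) : Prop :=
  ∀ u v : V, G.Adj u v → ∃ x ∈ S, G.dist u x ≠ G.dist v x

noncomputable def localMetricDim (G : SimpleGraph V) [Fintype V] : ℕ :=
  sInf {n | ∃ S : Finset V, S.card = n ∧ IsLocalResolvingSet G ↑S}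

def IsIndepVertexSet (G : SimpleGraph V) (S : Set V) : Prop :=
  S.Pairwise fun u v => ¬ G.Adj u v

noncomputable def indepNum (G : SimpleGraph V) [Fintype V] : ℕ :=
  sSup {n | ∃ S : Finset V, S.card = n ∧ IsIndepVertexSet G ↑S}

def IsAdjResolvingSet (G : SimpleGraph V) (S : Set V) : Prop :=
  ∀ x y : V, x ≠ y → x ∉ S → y ∉ S →
    ∃ s ∈ S, (G.Adj s x ∧ ¬ G.Adj s y) ∨ (¬ G.Adj s x ∧ G.Adj s y)

noncomputable def adjDim (G : SimpleGraph V) [Fintype V] : ℕ :=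
  sInf {n | ∃ S : Finset V, S.card = n ∧ IsAdjResolvingSet G ↑S}

def IsKResolvingSet (G : SimpleGraph V) (k : ℕ) (S : Finset V) : Prop :=
  ∀ x y : V, x ≠ y → k ≤ (S.filter fun w => G.dist x w ≠ G.dist y w).card

noncomputable def kMetricDim (G : SimpleGraph V) [Fintype V] (k : ℕ) : ℕ :=
  sInf {n | ∃ S : Finset V, S.card = n ∧ IsKResolvingSet G k S}

def IsKMetricDimensional (G : SimpleGraph V) (k : ℕ) : Prop :=
  (∃ S : Finset V, IsKResolvingSet G k S) ∧
    ∀ j : ℕ, (∃ S : Finset V, IsKResolvingSet G j S) → j ≤ k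

/-- distance from a vertex to a finite set of vertices -/
noncomputable def fsetDist (G : SimpleGraph V) (v : V) (P : Finset V) : ℕ :=
  sInf {d | ∃ w ∈ P, G.dist v w = d}

def IsResolvingPartition [Fintype V] [DecidableEq V] (G : SimpleGraph V)
    (Pt : Finpartition (Finset.univ : Finset V)) : Prop :=
  ∀ u v : V, u ≠ v → ∃ P ∈ Pt.parts, fsetDist G u P ≠ fsetDist G v P

noncomputable def partitionDim (G : SimpleGraph V) [Fintype V] [DecidableEq V] : ℕ :=
  sInf {n | ∃ Pt : Finpartition (Finset.univ : Finset V), Pt.parts.card = n ∧ IsResolvingPartition G Pt}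

def SetStronglyResolves (G : SimpleGraph V) (W : Finset V) (x y : V) : Prop :=
  x ∉ W ∧ y ∉ W ∧
    (fsetDist G x W = G.dist x y + fsetDist G y W ∨
      fsetDist G y W = G.dist y x + fsetDist G x W)

def IsStrongResolvingPartition [Fintype V] [DecidableEq V] (G : SimpleGraph V)
    (Pt : Finpartition (Finset.univ : Finset V)) : Prop :=
  ∀ Q ∈ Pt.parts, ∀ x ∈ Q, ∀ y ∈ Q, x ≠ y →
    ∃ P ∈ Pt.parts, SetStronglyResolves G P x y

noncomputable def strongPartitionDim (G : SimpleGraph V) [Fintype V] [DecidableEq V] : ℕ :=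
  sInf {n | ∃ Pt : Finpartition (Finset.univ : Finset V),
    Pt.parts.card = n ∧ IsStrongResolvingPartition G Pt}

/-- distance from an edge (as an unordered pair) to a vertex -/
noncomputable def edgeDist (G : SimpleGraph V) (e : Sym2 V) (v : V) : ℕ :=
  Sym2.lift ⟨fun a b => min (G.dist a v) (G.dist b v), fun a b => min_comm _ _⟩ e

def IsEdgeResolvingSet (G : SimpleGraph V) (S : Set V) : Prop :=
  ∀ e ∈ G.edgeSet, ∀ f ∈ G.edgeSet, e ≠ f → ∃ x ∈ S, edgeDist G e x ≠ edgeDist G f x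

noncomputable def edgeMetricDim (G : SimpleGraph V) [Fintype V] : ℕ :=
  sInf {n | ∃ S : Finset V, S.card = n ∧ IsEdgeResolvingSet G ↑S}

noncomputable def Rset (G : SimpleGraph V) [Fintype V] (x y : V) : Finset V :=
  Finset.univ.filter fun w => G.dist x w ≠ G.dist y w

def IsResolvingFunction (G : SimpleGraph V) [Fintype V] (f : V → ℝ) : Prop :=
  (∀ v : V, 0 ≤ f v ∧ f v ≤ 1) ∧
    ∀ x y : V, x ≠ y → 1 ≤ ∑ w ∈ Rset G x y, f w

noncomputable def fracMetricDim (G : SimpleGraph V) [Fintype V] : ℝ :=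
  sInf {t : ℝ | ∃ f : V → ℝ, IsResolvingFunction G f ∧ t = ∑ v, f v}

def AreTwins (G : SimpleGraph V) (u v : V) : Prop :=
  u ≠ v ∧ (G.neighborSet u = G.neighborSet v ∨
    insert u (G.neighborSet u) = insert v (G.neighborSet v))

noncomputable def graphDiam (G : SimpleGraph V) : ℕ :=
  sSup (Set.range fun p : V × V => G.dist p.1 p.2)



lemma exists_adj_closer {V : Type*} (G : SimpleGraph V) (hG : G.Connected) {v w : V}
    (h : v ≠ w) : ∃ v', G.Adj v v' ∧ G.dist v' w + 1 ≤ G.dist v w := by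
  obtain ⟨p, hp⟩ := hG.exists_walk_length_eq_dist v w
  cases p with
  | nil => exact absurd rfl h
  | cons hadj q =>
    exact ⟨_, hadj, by
      have := SimpleGraph.dist_le q
      simp [SimpleGraph.Walk.length_cons] at hp
      omega⟩

theorem stmt1 [Fintype V] (G : SimpleGraph V) (hG : G.Connected) (u v : V) (huv : u ≠ v)
    (hmmd : MutuallyMaxDistant G u v) (S : Set V) (hS : IsStrongResolvingSet G S) :
    u ∈ S ∨ v ∈ S := by
  obtain ⟨w, hwS, hres⟩ := hS u v huv
  rcases hres with h | h
  · right
    by_contra hvS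
    have hwv : w ≠ v := fun hwv => hvS (hwv ▸ hwS)
    obtain ⟨v', hadj, hlt⟩ := exists_adj_closer G hG hwv.symm
    have h1 : G.dist w u ≤ G.dist w v' + G.dist v' u := hG.dist_triangle
    have h2 : G.dist u v' ≤ G.dist u v := hmmd.2 v' hadj
    have c1 : G.dist v' w = G.dist w v' := SimpleGraph.dist_comm
    have c2 : G.dist v' u = G.dist u v' := SimpleGraph.dist_comm
    have c3 : G.dist v u = G.dist u v := SimpleGraph.dist_comm
    have c4 : G.dist v w = G.dist w v := SimpleGraph.dist_comm
    omega
  · left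
    by_contra huS
    have hwu : w ≠ u := fun hwu => huS (hwu ▸ hwS)
    obtain ⟨u', hadj, hlt⟩ := exists_adj_closer G hG hwu.symm
    have h1 : G.dist w v ≤ G.dist w u' + G.dist u' v := hG.dist_triangle
    have h2 : G.dist v u' ≤ G.dist v u := hmmd.1 u' hadj
    have c1 : G.dist u' w = G.dist w u' := SimpleGraph.dist_comm
    have c2 : G.dist u' v = G.dist v u' := SimpleGraph.dist_comm
    have c3 : G.dist u v = G.dist v u := SimpleGraph.dist_comm
    have c4 : G.dist u w = G.dist w u := SimpleGraph.dist_comm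
    omega
end

section
/- A nontrivial connected graph G has local metric dimension 1 if and only if G is bipartite. -/
open SimpleGraph Finset

variable {V : Type*}

lemma walk_parity {G : SimpleGraph V} (C : G.Coloring (Fin 2)) {a b : V}
    (p : G.Walk a b) : (C a = C b) ↔ Even p.length := by
  induction p with
  | nil => simp
  | @cons u w x h p ih =>
    simp only [SimpleGraph.Walk.length_cons, Nat.even_add_one, ← ih]
    have hne : C u ≠ C w := C.valid h
    have h1 := (C u).isLt
    have h2 := (C w).isLt
    have h3 := (C x).isLt
    simp only [Fin.ext_iff] at *
    omega

lemma dist_ne_of_adj {G : SimpleGraph V} (hG : G.Connected)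
    (C : G.Coloring (Fin 2)) {u v : V} (h : G.Adj u v) (x : V) :
    G.dist u x ≠ G.dist v x := by
  obtain ⟨p, hp⟩ := (hG u x).exists_walk_length_eq_dist
  obtain ⟨q, hq⟩ := (hG v x).exists_walk_length_eq_dist
  have h1 := walk_parity C p
  have h2 := walk_parity C q
  rw [hp] at h1; rw [hq] at h2
  intro hd
  rw [hd] at h1
  have hne : C u ≠ C v := C.valid h
  have key := h1.trans h2.symm
  simp only [Fin.ext_iff] at hne key
  omega

theorem stmt3 [Fintype V] (G : SimpleGraph V) (hG : G.Connected)
    (hn : 2 ≤ Fintype.card V) :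
    localMetricDim G = 1 ↔ G.Colorable 2 := by
  classical
  -- G has at least one edge
  obtain ⟨a, b, hab⟩ := Fintype.exists_pair_of_one_lt_card (by omega : 1 < Fintype.card V)
  have hedge : ∃ u v : V, G.Adj u v := by
    obtain ⟨p⟩ := hG a b
    cases p with
    | nil => exact absurd rfl hab
    | cons h _ => exact ⟨_, _, h⟩
  obtain ⟨u0, v0, huv0⟩ := hedge
  have h0 : 0 ∉ {n | ∃ S : Finset V, S.card = n ∧ IsLocalResolvingSet G ↑S} := by
    rintro ⟨S, hS0, hS⟩
    rw [Finset.card_eq_zero] at hS0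
    subst hS0
    obtain ⟨x, hx, -⟩ := hS u0 v0 huv0
    simpa using hx
  constructor
  · intro h1
    have hne : {n | ∃ S : Finset V, S.card = n ∧ IsLocalResolvingSet G ↑S}.Nonempty := by
      by_contra hc
      rw [Set.not_nonempty_iff_eq_empty] at hc
      rw [localMetricDim, hc] at h1
      simp at h1
    have hmem := Nat.sInf_mem hne
    rw [localMetricDim] at h1
    rw [h1] at hmem
    obtain ⟨S, hS1, hS⟩ := hmem
    rw [Finset.card_eq_one] at hS1
    obtain ⟨x, rfl⟩ := hS1
    refine ⟨SimpleGraph.Coloring.mk (fun v => ⟨G.dist v x % 2, Nat.mod_lt _ two_pos⟩) ?_⟩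
    intro p q hpq
    obtain ⟨y, hy, hd⟩ := hS p q hpq
    simp only [Finset.coe_singleton, Set.mem_singleton_iff] at hy
    rw [hy] at hd
    have ht1 : G.dist p x ≤ G.dist p q + G.dist q x := hG.dist_triangle
    have ht2 : G.dist q x ≤ G.dist q p + G.dist p x := hG.dist_triangle
    have hpq1 : G.dist p q = 1 := SimpleGraph.dist_eq_one_iff_adj.mpr hpq
    have hqp1 : G.dist q p = 1 := SimpleGraph.dist_eq_one_iff_adj.mpr hpq.symm
    rw [hpq1] at ht1; rw [hqp1] at ht2
    simp only [ne_eq, Fin.mk.injEq]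
    omega
  · intro ⟨C⟩
    have hmem : 1 ∈ {n | ∃ S : Finset V, S.card = n ∧ IsLocalResolvingSet G ↑S} := by
      refine ⟨{u0}, Finset.card_singleton _, ?_⟩
      intro p q hpq
      exact ⟨u0, by simp, dist_ne_of_adj hG C hpq u0⟩
    refine le_antisymm (Nat.sInf_le hmem) ?_
    rcases Nat.eq_zero_or_pos (sInf {n | ∃ S : Finset V, S.card = n ∧ IsLocalResolvingSet G ↑S}) with h | h
    · rw [localMetricDim]
      exfalso
      have := Nat.sInf_mem ⟨1, hmem⟩
      rw [h] at this
      exact h0 this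
    · exact h
end

section
/- Let G be a k-metric dimensional connected graph and 1 ≤ k₁ < k₂ ≤ k. Then the k₁-metric dimension of G is strictly less than the k₂-metric dimension of G. -/
open SimpleGraph Finset

variable {V : Type*}

theorem stmt11 [Fintype V] (G : SimpleGraph V) (hG : G.Connected) (k k₁ k₂ : ℕ)
    (hk : IsKMetricDimensional G k) (h1 : 1 ≤ k₁) (h12 : k₁ < k₂) (h2 : k₂ ≤ k) :
    kMetricDim G k₁ < kMetricDim G k₂ := by
  classical
  -- there exist two distinct vertices
  obtain ⟨x₀, y₀, hxy₀⟩ : ∃ x y : V, x ≠ y := by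
    by_contra h
    push_neg at h
    have hres : IsKResolvingSet G (k+1) (∅ : Finset V) := by
      intro x y hxy
      exact absurd (h x y) hxy
    have := hk.2 (k+1) ⟨∅, hres⟩
    omega
  have hne : {n | ∃ S : Finset V, S.card = n ∧ IsKResolvingSet G k₂ S}.Nonempty := by
    obtain ⟨S, hS⟩ := hk.1
    exact ⟨S.card, S, rfl, fun x y hxy => le_trans h2 (hS x y hxy)⟩
  obtain ⟨S, hcard, hres⟩ := Nat.sInf_mem hne
  have hS2 : k₂ ≤ S.card := by
    have h0 := hres x₀ y₀ hxy₀
    have hsub := Finset.card_le_card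
      (Finset.filter_subset (fun w => G.dist x₀ w ≠ G.dist y₀ w) S)
    omega
  obtain ⟨w, hw⟩ : ∃ w, w ∈ S := Finset.card_pos.mp (by omega)
  have hres' : IsKResolvingSet G k₁ (S.erase w) := by
    intro x y hxy
    have h0 := hres x y hxy
    have hsub : (S.filter fun z => G.dist x z ≠ G.dist y z).erase w ⊆
        (S.erase w).filter fun z => G.dist x z ≠ G.dist y z := by
      intro a ha
      simp only [Finset.mem_erase, Finset.mem_filter] at ha ⊢
      tauto
    have hc := Finset.card_le_card hsub
    have hc2 := Finset.pred_card_le_card_erase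
      (s := S.filter fun z => G.dist x z ≠ G.dist y z) (a := w)
    omega
  have hle : kMetricDim G k₁ ≤ (S.erase w).card :=
    Nat.sInf_le ⟨S.erase w, rfl, hres'⟩
  have hce : (S.erase w).card = S.card - 1 := Finset.card_erase_of_mem hw
  have h2eq : kMetricDim G k₂ = S.card := hcard.symm
  omega
end
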